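/- Let t₁, t₂, t₃, t₄ be nonzero complex numbers and let g = x₂(t₄) x₁(t₃) x₂(t₂) x₁(t₁) with entries a, b, c, d ∈ ℂ[z] and coefficients a_k, b_k, c_k, d_k of z^k. Then a₁ = t₂t₃ ≠ 0, and the factorization parameters are recovered by t₄ = c₂/a₁, t₃ = (b₀a₁ − b₁)/a₁, t₂ = (c₁a₁ − c₂)/a₁, and t₁ = b₁/a₁. -/

import Mathlib

open Polynomial

/-- The one-parameter subgroup `x₁(t) = exp(t e₁)` inside `SL₂(ℂ[z])`. -/
noncomputable def x₁ (t : ℂ) : Matrix (Fin 2) (Fin 2) (Polynomial ℂ) :=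
  !![1, C t; 0, 1]

/-- The one-parameter subgroup `x₂(t) = exp(t e₂)` inside `SL₂(ℂ[z])`. -/
noncomputable def x₂ (t : ℂ) : Matrix (Fin 2) (Fin 2) (Polynomial ℂ) :=
  !![1, 0; C t * X, 1]

/-- Recovery of the factorization parameters of `g = x₂(t₄)x₁(t₃)x₂(t₂)x₁(t₁)`
from the coefficients of its matrix entries. -/
theorem factorization_parameters (t₁ t₂ t₃ t₄ : ℂ)
    (h₁ : t₁ ≠ 0) (h₂ : t₂ ≠ 0) (h₃ : t₃ ≠ 0) (h₄ : t₄ ≠ 0) :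
    let g := x₂ t₄ * x₁ t₃ * x₂ t₂ * x₁ t₁
    let a := g 0 0; let b := g 0 1; let c := g 1 0
    a.coeff 1 = t₂ * t₃ ∧ a.coeff 1 ≠ 0 ∧
    t₄ = c.coeff 2 / a.coeff 1 ∧
    t₃ = (b.coeff 0 * a.coeff 1 - b.coeff 1) / a.coeff 1 ∧
    t₂ = (c.coeff 1 * a.coeff 1 - c.coeff 2) / a.coeff 1 ∧
    t₁ = b.coeff 1 / a.coeff 1 := by
  have hg : (x₂ t₄ * x₁ t₃ * x₂ t₂ * x₁ t₁) =
      !![1 + C (t₂*t₃) * X, C (t₁+t₃) + C (t₁*t₂*t₃) * X;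
        C (t₂+t₄) * X + C (t₂*t₃*t₄) * X^2,
        1 + C (t₁*t₂ + t₁*t₄ + t₃*t₄) * X + C (t₁*t₂*t₃*t₄) * X^2] := by
    simp [x₁, x₂, Matrix.mul_fin_two, C_mul, C_add]
    ring_nf
    try simp
  intro g a b c
  have ha : a = 1 + C (t₂*t₃) * X := by simp [a, g, hg]
  have hb : b = C (t₁+t₃) + C (t₁*t₂*t₃) * X := by simp [b, g, hg]
  have hc : c = C (t₂+t₄) * X + C (t₂*t₃*t₄) * X^2 := by simp [c, g, hg]
  have ha1 : a.coeff 1 = t₂ * t₃ := by simp [ha, coeff_one]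
  have hb0 : b.coeff 0 = t₁ + t₃ := by simp [hb]
  have hb1 : b.coeff 1 = t₁ * t₂ * t₃ := by simp [hb]
  have hc1 : c.coeff 1 = t₂ + t₄ := by
    simp [hc, coeff_X_pow, mul_assoc, coeff_C_mul]
  have hc2 : c.coeff 2 = t₂ * t₃ * t₄ := by
    simp [hc, coeff_X_pow, mul_assoc, coeff_C_mul]
  have hne : t₂ * t₃ ≠ 0 := mul_ne_zero h₂ h₃
  refine ⟨ha1, by rw [ha1]; exact hne, ?_, ?_, ?_, ?_⟩
  · rw [ha1, hc2]; field_simp; try ring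
  · rw [ha1, hb0, hb1]; field_simp; try ring
  · rw [ha1, hc1, hc2]; field_simp; try ring
  · rw [ha1, hb1]; field_simp; try ring
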